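/- Let d ≥ 1, q ∈ (2,∞), q' = q/(q−1). Then there exists a constant C = C(d,q) > 0 such that for all x, y ∈ ℝ^d with δ := |x−y| > 0, the surface integral over the sphere of radius 2δ centered at x satisfies ∫_{{z : |x−z| = 2δ}} ( ∫_0^∞ r^{-(d+1)q'/2} e^{-q' |y−z|^2/(2r)} dr )^{1/q'} dS(z) ≤ C δ^{-2/q}, where dS denotes the (d−1)-dimensional surface measure on the sphere. -/

import Mathlib

open MeasureTheory Real

section stmt7_aux

open Set Module ENNReal NNReal

lemma stmt7_meas (e a : ℝ) : Measurable (fun r : ℝ => r ^ e * Real.exp (-a / (2 * r))) := by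
  have h1 : Measurable fun r : ℝ => r ^ e := by fun_prop
  exact h1.mul (Real.measurable_exp.comp (measurable_const.div (measurable_const.mul measurable_id)))

lemma stmt7_gpi {e : ℝ} (he : e < -1) {a : ℝ} (ha : 0 < a) :
    IntegrableOn (fun r : ℝ => r ^ e * Real.exp (-a / (2 * r))) (Set.Ioi (0:ℝ)) := by
  have hmeas := stmt7_meas e a
  rw [← Set.Ioc_union_Ioi_eq_Ioi (zero_le_one (α := ℝ))]
  apply IntegrableOn.union
  · -- Ioc 0 1
    set n : ℕ := ⌈-e⌉₊ with hn
    have hne : -e ≤ n := Nat.le_ceil _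
    have hexp : -1 < e + n := by linarith
    have hint : IntegrableOn (fun r : ℝ => (n.factorial * (2 / a) ^ n) * r ^ (e + n))
        (Set.Ioc (0:ℝ) 1) := by
      exact ((intervalIntegral.intervalIntegrable_rpow' hexp (a := 0) (b := 1)).1).const_mul _
    apply hint.mono' (hmeas.aestronglyMeasurable.restrict)
    rw [ae_restrict_iff' measurableSet_Ioc]
    filter_upwards with r hr
    obtain ⟨hr0, hr1⟩ := hr
    have hx : 0 < a / (2 * r) := by positivity
    have key : Real.exp (-a / (2 * r)) ≤ n.factorial * (2 / a) ^ n * r ^ (n:ℕ) := by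
      rw [neg_div, Real.exp_neg]
      have h1 : (a / (2 * r)) ^ n / n.factorial ≤ Real.exp (a / (2 * r)) :=
        Real.pow_div_factorial_le_exp _ hx.le n
      have h2 : (0:ℝ) < (a / (2 * r)) ^ n / n.factorial := by positivity
      calc (Real.exp (a / (2 * r)))⁻¹ ≤ ((a / (2 * r)) ^ n / n.factorial)⁻¹ :=
            inv_anti₀ h2 h1
        _ = n.factorial * (2 / a) ^ n * r ^ (n:ℕ) := by
            field_simp
            ring_nf
            rw [← mul_pow, ← mul_pow, ← mul_pow, ← mul_pow, ← mul_pow]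
            field_simp
            simp
    have hrpos : (0:ℝ) < r ^ e := Real.rpow_pos_of_pos hr0 e
    rw [Real.norm_eq_abs, abs_mul, abs_of_pos hrpos, abs_of_pos (Real.exp_pos _)]
    calc r ^ e * Real.exp (-a / (2 * r)) ≤ r ^ e * (n.factorial * (2 / a) ^ n * r ^ (n:ℕ)) :=
          mul_le_mul_of_nonneg_left key hrpos.le
      _ = n.factorial * (2 / a) ^ n * r ^ (e + n) := by
          rw [Real.rpow_add hr0, Real.rpow_natCast]; ring
  · -- Ioi 1
    apply (integrableOn_Ioi_rpow_of_lt he one_pos).mono' (hmeas.aestronglyMeasurable.restrict)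
    rw [ae_restrict_iff' measurableSet_Ioi]
    filter_upwards with r hr
    rw [Set.mem_Ioi] at hr
    have hr0 : (0:ℝ) < r := lt_trans one_pos hr
    have h1 : Real.exp (-a / (2 * r)) ≤ 1 := by
      apply Real.exp_le_one_iff.2
      rw [neg_div]
      simp only [Left.neg_nonpos_iff]
      positivity
    rw [Real.norm_eq_abs, abs_mul, abs_of_pos (Real.rpow_pos_of_pos hr0 e),
      abs_of_pos (Real.exp_pos _)]
    nlinarith [Real.rpow_pos_of_pos hr0 e, Real.exp_pos (-a / (2*r))]

lemma stmt7_gscale (e a : ℝ) {b : ℝ} (hb : 0 < b) :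
    (∫ r in Set.Ioi (0:ℝ), r ^ e * Real.exp (-(a * b) / (2 * r)))
      = b ^ (e + 1) * ∫ s in Set.Ioi (0:ℝ), s ^ e * Real.exp (-a / (2 * s)) := by
  have h := integral_comp_mul_left_Ioi (fun r => r ^ e * Real.exp (-(a * b) / (2 * r))) 0 hb
  rw [mul_zero] at h
  have h2 : (∫ x in Set.Ioi (0:ℝ), (b * x) ^ e * Real.exp (-(a * b) / (2 * (b * x))))
      = b ^ e * ∫ s in Set.Ioi (0:ℝ), s ^ e * Real.exp (-a / (2 * s)) := by
    rw [← MeasureTheory.integral_const_mul]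
    apply setIntegral_congr_fun measurableSet_Ioi
    intro x hx
    rw [Set.mem_Ioi] at hx
    dsimp only
    rw [Real.mul_rpow hb.le hx.le]
    have : -(a * b) / (2 * (b * x)) = -a / (2 * x) := by
      field_simp
    rw [this]; ring
  rw [h2, smul_eq_mul] at h
  have : (∫ x in Set.Ioi (0:ℝ), x ^ e * Real.exp (-(a * b) / (2 * x)))
      = b * (b ^ e * ∫ s in Set.Ioi (0:ℝ), s ^ e * Real.exp (-a / (2 * s))) := by
    rw [h, ← mul_assoc, mul_inv_cancel₀ hb.ne', one_mul]
  rw [this, ← mul_assoc, mul_comm b (b ^ e), Real.rpow_add_one hb.ne' e]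

lemma stmt7_sq_norm_eq (d : ℕ) (v : EuclideanSpace ℝ (Fin d)) : ‖v‖ ^ 2 = ∑ j, v j ^ 2 := by
  rw [EuclideanSpace.norm_eq, Real.sq_sqrt (by positivity)]
  simp [sq_abs]

lemma stmt7_sqrt_lip {d : ℕ} (hd : 1 ≤ d) {a b : ℝ} (ha0 : 0 ≤ a) (hb0 : 0 ≤ b)
    (ha : a ^ 2 ≤ 1 - 1 / d) (hb : b ^ 2 ≤ 1 - 1 / d) :
    |Real.sqrt (1 - a ^ 2) - Real.sqrt (1 - b ^ 2)| ≤ Real.sqrt d * |a - b| := by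
  have hd0 : (0:ℝ) < d := by exact_mod_cast hd
  have hinv : (0:ℝ) < 1 / d := by positivity
  set u := Real.sqrt (1 - a ^ 2) with hu
  set v := Real.sqrt (1 - b ^ 2) with hv
  have ha2 : 1 / (d:ℝ) ≤ 1 - a ^ 2 := by linarith
  have hb2 : 1 / (d:ℝ) ≤ 1 - b ^ 2 := by linarith
  have hu2 : u ^ 2 = 1 - a ^ 2 := Real.sq_sqrt (by linarith)
  have hv2 : v ^ 2 = 1 - b ^ 2 := Real.sq_sqrt (by linarith)
  have hu0 : 0 ≤ u := Real.sqrt_nonneg _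
  have hv0 : 0 ≤ v := Real.sqrt_nonneg _
  have hsd : Real.sqrt (1 / d) * Real.sqrt d = 1 := by
    rw [← Real.sqrt_mul hinv.le]
    rw [one_div_mul_cancel hd0.ne', Real.sqrt_one]
  have hud : 1 ≤ u * Real.sqrt d := by
    have : Real.sqrt (1 / d) ≤ u := Real.sqrt_le_sqrt ha2
    calc (1:ℝ) = Real.sqrt (1 / d) * Real.sqrt d := hsd.symm
      _ ≤ u * Real.sqrt d := by
          apply mul_le_mul_of_nonneg_right this (Real.sqrt_nonneg _)
  have hvd : 1 ≤ v * Real.sqrt d := by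
    have : Real.sqrt (1 / d) ≤ v := Real.sqrt_le_sqrt hb2
    calc (1:ℝ) = Real.sqrt (1 / d) * Real.sqrt d := hsd.symm
      _ ≤ v * Real.sqrt d := by
          apply mul_le_mul_of_nonneg_right this (Real.sqrt_nonneg _)
  have ha1 : a ≤ 1 := by nlinarith
  have hb1 : b ≤ 1 := by nlinarith
  have hsum : 2 ≤ (u + v) * Real.sqrt d := by
    rw [add_mul]; linarith
  have habs : |u - v| * (u + v) = |a - b| * (a + b) := by
    have h1 : |(u - v) * (u + v)| = |(a - b) * (a + b)| := by
      have : (u - v) * (u + v) = -((a - b) * (a + b)) := by nlinarith [hu2, hv2]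
      rw [this, abs_neg]
    rw [abs_mul, abs_mul, abs_of_nonneg (by linarith : (0:ℝ) ≤ u + v),
      abs_of_nonneg (by linarith : (0:ℝ) ≤ a + b)] at h1
    exact h1
  nlinarith [mul_le_mul_of_nonneg_left hsum (abs_nonneg (u - v)), abs_nonneg (a - b),
    Real.sqrt_nonneg d, mul_le_mul_of_nonneg_right (show a + b ≤ 2 by linarith)
      (mul_nonneg (abs_nonneg (a-b)) (Real.sqrt_nonneg d))]

lemma stmt7_sphere_finite (d : ℕ) (hd : 1 ≤ d) :
    μH[(d:ℝ) - 1] (Metric.sphere (0 : EuclideanSpace ℝ (Fin d)) 1) < ⊤ := by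
  classical
  have hd0 : (0:ℝ) < d := by exact_mod_cast hd
  have hdim : (0:ℝ) ≤ (d:ℝ) - 1 := by
    have : (1:ℝ) ≤ d := by exact_mod_cast hd
    linarith
  set H : Fin d → Submodule ℝ (EuclideanSpace ℝ (Fin d)) :=
    fun i => LinearMap.ker (EuclideanSpace.projₗ i) with hH
  have hrank : ∀ i, (finrank ℝ (H i) : ℝ) = (d:ℝ) - 1 := by
    intro i
    have hsurj : Function.Surjective (EuclideanSpace.projₗ (𝕜 := ℝ) (i := i)) := by
      intro c
      refine ⟨EuclideanSpace.single i c, ?_⟩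
      simp
    have hr := LinearMap.finrank_range_add_finrank_ker (EuclideanSpace.projₗ (𝕜 := ℝ) (i := i))
    rw [LinearMap.range_eq_top.2 hsurj] at hr
    simp only [finrank_top, finrank_self, finrank_euclideanSpace_fin] at hr
    have hr' : 1 + finrank ℝ (H i) = d := hr
    have : finrank ℝ (H i) = d - 1 := by omega
    rw [this]
    push_cast [Nat.cast_sub hd]
    ring
  have hball : ∀ i, μH[(d:ℝ) - 1] (Metric.closedBall (0 : H i) 1) < ⊤ := by
    intro i
    haveI : BorelSpace (H i) := Subtype.borelSpace _
    rw [← hrank i]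
    exact (isCompact_closedBall (0 : H i) 1).measure_lt_top
  set g : (i : Fin d) → ℝ → (H i) → EuclideanSpace ℝ (Fin d) := fun i σ w =>
    (w : EuclideanSpace ℝ (Fin d)) +
      (σ * Real.sqrt (1 - ‖(w : EuclideanSpace ℝ (Fin d))‖ ^ 2)) • EuclideanSpace.single i 1
    with hg
  set s : (i : Fin d) → Set (H i) := fun i =>
    {w | ‖(w : EuclideanSpace ℝ (Fin d))‖ ^ 2 ≤ 1 - 1 / d} with hs
  set c : NNReal := ⟨1 + Real.sqrt d, by positivity⟩ with hc
  have hLip : ∀ (i : Fin d) (σ : ℝ), |σ| = 1 → LipschitzOnWith c (g i σ) (s i) := by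
    intro i σ hσ
    rw [lipschitzOnWith_iff_dist_le_mul]
    intro w hw w' hw'
    have hwmem : ‖(w : EuclideanSpace ℝ (Fin d))‖ ^ 2 ≤ 1 - 1 / d := hw
    have hw'mem : ‖(w' : EuclideanSpace ℝ (Fin d))‖ ^ 2 ≤ 1 - 1 / d := hw'
    have hdiff : g i σ w - g i σ w' =
        ((w : EuclideanSpace ℝ (Fin d)) - (w' : EuclideanSpace ℝ (Fin d))) +
          (σ * Real.sqrt (1 - ‖(w : EuclideanSpace ℝ (Fin d))‖ ^ 2) -
            σ * Real.sqrt (1 - ‖(w' : EuclideanSpace ℝ (Fin d))‖ ^ 2)) •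
            EuclideanSpace.single i (1:ℝ) := by
      simp only [hg]
      module
    have hdist : dist w w' =
        ‖(w : EuclideanSpace ℝ (Fin d)) - (w' : EuclideanSpace ℝ (Fin d))‖ := by
      rw [Subtype.dist_eq, dist_eq_norm]
    have hsq := stmt7_sqrt_lip hd (norm_nonneg (w : EuclideanSpace ℝ (Fin d)))
      (norm_nonneg (w' : EuclideanSpace ℝ (Fin d))) hwmem hw'mem
    have habs : |‖(w : EuclideanSpace ℝ (Fin d))‖ - ‖(w' : EuclideanSpace ℝ (Fin d))‖| ≤
        ‖(w : EuclideanSpace ℝ (Fin d)) - (w' : EuclideanSpace ℝ (Fin d))‖ :=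
      abs_norm_sub_norm_le _ _
    calc dist (g i σ w) (g i σ w')
        = ‖g i σ w - g i σ w'‖ := dist_eq_norm _ _
      _ ≤ ‖(w : EuclideanSpace ℝ (Fin d)) - (w' : EuclideanSpace ℝ (Fin d))‖ +
            ‖(σ * Real.sqrt (1 - ‖(w : EuclideanSpace ℝ (Fin d))‖ ^ 2) -
              σ * Real.sqrt (1 - ‖(w' : EuclideanSpace ℝ (Fin d))‖ ^ 2)) •
              EuclideanSpace.single i (1:ℝ)‖ := by
          rw [hdiff]; exact norm_add_le _ _
      _ ≤ ‖(w : EuclideanSpace ℝ (Fin d)) - (w' : EuclideanSpace ℝ (Fin d))‖ +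
            Real.sqrt d * ‖(w : EuclideanSpace ℝ (Fin d)) - (w' : EuclideanSpace ℝ (Fin d))‖ := by
          apply add_le_add_right
          rw [norm_smul, EuclideanSpace.norm_single, norm_one, mul_one, ← mul_sub,
            Real.norm_eq_abs, abs_mul, hσ, one_mul]
          exact le_trans hsq (mul_le_mul_of_nonneg_left habs (Real.sqrt_nonneg _))
      _ = (c : ℝ) * dist w w' := by
          rw [hdist, hc]
          change _ = (1 + Real.sqrt d) * _
          ring
  have hsub : ∀ i, s i ⊆ Metric.closedBall (0 : H i) 1 := by
    intro i w hw
    have hwmem : ‖(w : EuclideanSpace ℝ (Fin d))‖ ^ 2 ≤ 1 - 1 / d := hw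
    rw [Metric.mem_closedBall, dist_zero_right]
    have h1 : ‖w‖ = ‖(w : EuclideanSpace ℝ (Fin d))‖ := by norm_cast
    rw [h1]
    nlinarith [norm_nonneg (w : EuclideanSpace ℝ (Fin d)), one_div_pos.2 hd0]
  have hcover : Metric.sphere (0 : EuclideanSpace ℝ (Fin d)) 1 ⊆
      ⋃ i : Fin d, (g i 1 '' s i ∪ g i (-1) '' s i) := by
    intro z hz
    have hz1 : ‖z‖ = 1 := by simpa using hz
    have hsum : ∑ j, z j ^ 2 = 1 := by
      rw [← stmt7_sq_norm_eq, hz1]; norm_num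
    haveI : Nonempty (Fin d) := ⟨⟨0, hd⟩⟩
    have hex : ∃ i, 1 / (d:ℝ) ≤ z i ^ 2 := by
      by_contra h
      push_neg at h
      have hlt : ∑ j, z j ^ 2 < ∑ _j : Fin d, 1 / (d:ℝ) :=
        Finset.sum_lt_sum_of_nonempty Finset.univ_nonempty (fun j _ => h j)
      rw [Finset.sum_const, Finset.card_univ, Fintype.card_fin, nsmul_eq_mul,
        mul_one_div, div_self hd0.ne'] at hlt
      linarith [hsum]
    obtain ⟨i, hi⟩ := hex
    set w0 : EuclideanSpace ℝ (Fin d) := z - EuclideanSpace.single i (z i) with hw0def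
    have hw0mem : w0 ∈ H i := by
      simp only [hH, LinearMap.mem_ker]
      show w0 i = 0
      simp [hw0def, EuclideanSpace.single_apply]
    have hw0n : ‖w0‖ ^ 2 = 1 - z i ^ 2 := by
      rw [stmt7_sq_norm_eq]
      have hterm : ∀ j, w0 j ^ 2 = z j ^ 2 - (if j = i then z i ^ 2 else 0) := by
        intro j
        simp only [hw0def, PiLp.sub_apply, EuclideanSpace.single_apply]
        split_ifs with hj
        · subst hj; ring
        · ring
      rw [Finset.sum_congr rfl (fun j _ => hterm j), Finset.sum_sub_distrib,
        Finset.sum_ite_eq' Finset.univ i (fun _ => z i ^ 2), if_pos (Finset.mem_univ i), hsum]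
    set w : H i := ⟨w0, hw0mem⟩ with hwdef
    have hwmem : w ∈ s i := by
      show ‖(w : EuclideanSpace ℝ (Fin d))‖ ^ 2 ≤ 1 - 1 / (d:ℝ)
      show ‖w0‖ ^ 2 ≤ 1 - 1 / (d:ℝ)
      rw [hw0n]; linarith
    set σ : ℝ := if 0 ≤ z i then 1 else -1 with hσdef
    have hgw : g i σ w = z := by
      simp only [hg]
      show w0 + (σ * Real.sqrt (1 - ‖w0‖ ^ 2)) • EuclideanSpace.single i 1 = z
      have h1 : 1 - ‖w0‖ ^ 2 = z i ^ 2 := by rw [hw0n]; ring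
      rw [h1, Real.sqrt_sq_eq_abs]
      have h2 : σ * |z i| = z i := by
        rw [hσdef]
        split_ifs with h
        · rw [one_mul, abs_of_nonneg h]
        · rw [abs_of_neg (lt_of_not_ge h)]; ring
      rw [h2]
      have h3 : (z i) • EuclideanSpace.single i (1:ℝ) = EuclideanSpace.single i (z i) := by
        ext j
        simp [EuclideanSpace.single_apply, mul_ite]
      rw [h3, hw0def]
      abel
    apply Set.mem_iUnion.2
    refine ⟨i, ?_⟩
    rw [hσdef] at hgw
    by_cases h : 0 ≤ z i
    · rw [if_pos h] at hgw
      exact Or.inl ⟨w, hwmem, hgw⟩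
    · rw [if_neg h] at hgw
      exact Or.inr ⟨w, hwmem, hgw⟩
  have himg : ∀ (i : Fin d) (σ : ℝ), |σ| = 1 →
      μH[(d:ℝ) - 1] (g i σ '' s i) < ⊤ := by
    intro i σ hσ
    haveI : BorelSpace (H i) := Subtype.borelSpace _
    calc μH[(d:ℝ) - 1] (g i σ '' s i)
        ≤ (c : ℝ≥0∞) ^ ((d:ℝ) - 1) * μH[(d:ℝ) - 1] (s i) :=
          (hLip i σ hσ).hausdorffMeasure_image_le hdim
      _ ≤ (c : ℝ≥0∞) ^ ((d:ℝ) - 1) * μH[(d:ℝ) - 1] (Metric.closedBall (0 : H i) 1) := by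
          exact mul_le_mul_right (measure_mono (hsub i)) _
      _ < ⊤ := ENNReal.mul_lt_top (ENNReal.rpow_lt_top_of_nonneg hdim ENNReal.coe_ne_top)
          (hball i)
  calc μH[(d:ℝ) - 1] (Metric.sphere (0 : EuclideanSpace ℝ (Fin d)) 1)
      ≤ μH[(d:ℝ) - 1] (⋃ i : Fin d, (g i 1 '' s i ∪ g i (-1) '' s i)) := measure_mono hcover
    _ ≤ ∑' i : Fin d, μH[(d:ℝ) - 1] (g i 1 '' s i ∪ g i (-1) '' s i) := measure_iUnion_le _
    _ < ⊤ := by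
        rw [tsum_fintype]
        apply ENNReal.sum_lt_top.2
        intro i _
        calc μH[(d:ℝ) - 1] (g i 1 '' s i ∪ g i (-1) '' s i)
            ≤ μH[(d:ℝ) - 1] (g i 1 '' s i) + μH[(d:ℝ) - 1] (g i (-1) '' s i) :=
              measure_union_le _ _
          _ < ⊤ := ENNReal.add_lt_top.2
              ⟨himg i 1 (by norm_num), himg i (-1) (by norm_num)⟩

lemma stmt7_sphere_scale (d : ℕ) (hd : 1 ≤ d) (x : EuclideanSpace ℝ (Fin d)) {R : ℝ} (hR : 0 < R) :
    μH[(d:ℝ) - 1] (Metric.sphere x R) ≤ (ENNReal.ofReal R) ^ ((d:ℝ) - 1) *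
      μH[(d:ℝ) - 1] (Metric.sphere (0 : EuclideanSpace ℝ (Fin d)) 1) := by
  have hdim : (0:ℝ) ≤ (d:ℝ) - 1 := by
    have : (1:ℝ) ≤ d := by exact_mod_cast hd
    linarith
  have himg : Metric.sphere x R =
      (fun z => x + R • z) '' Metric.sphere (0 : EuclideanSpace ℝ (Fin d)) 1 := by
    ext z'
    simp only [Set.mem_image, mem_sphere_zero_iff_norm, Metric.mem_sphere]
    constructor
    · intro h
      refine ⟨R⁻¹ • (z' - x), ?_, ?_⟩
      · rw [dist_zero_right, norm_smul, norm_inv, Real.norm_eq_abs, abs_of_pos hR,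
          ← dist_eq_norm, h, inv_mul_cancel₀ hR.ne']
      · rw [smul_smul, mul_inv_cancel₀ hR.ne', one_smul, add_sub_cancel]
    · rintro ⟨z, hz, rfl⟩
      rw [dist_zero_right] at hz
      rw [dist_eq_norm]
      simp only [add_sub_cancel_left]
      rw [norm_smul, Real.norm_eq_abs, abs_of_pos hR, hz, mul_one]
  have hlip : LipschitzWith R.toNNReal (fun z : EuclideanSpace ℝ (Fin d) => x + R • z) := by
    apply LipschitzWith.of_dist_le_mul
    intro a b
    rw [dist_add_left, dist_smul₀, Real.coe_toNNReal _ hR.le, Real.norm_eq_abs, abs_of_pos hR]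
  calc μH[(d:ℝ) - 1] (Metric.sphere x R)
      = μH[(d:ℝ) - 1] ((fun z => x + R • z) '' Metric.sphere (0 : EuclideanSpace ℝ (Fin d)) 1) := by
        rw [himg]
    _ ≤ (R.toNNReal : ℝ≥0∞) ^ ((d:ℝ) - 1) *
          μH[(d:ℝ) - 1] (Metric.sphere (0 : EuclideanSpace ℝ (Fin d)) 1) :=
        hlip.hausdorffMeasure_image_le hdim _
    _ = (ENNReal.ofReal R) ^ ((d:ℝ) - 1) *
          μH[(d:ℝ) - 1] (Metric.sphere (0 : EuclideanSpace ℝ (Fin d)) 1) := by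
        rw [ENNReal.ofReal]

end stmt7_aux

/-- Surface-integral estimate: for `q' = q/(q-1)` and `δ = |x-y| > 0`,
`∫_{|x-z|=2δ} (∫_0^∞ r^{-(d+1)q'/2} e^{-q'|y-z|²/(2r)} dr)^{1/q'} dS(z) ≤ C δ^{-2/q}`,
the surface measure being the `(d-1)`-dimensional Hausdorff measure on the sphere. -/
theorem stmt_7 (d : ℕ) (hd : 1 ≤ d) (q : ℝ) (hq : 2 < q) :
    ∃ C : ℝ, 0 < C ∧
      ∀ x y : EuclideanSpace ℝ (Fin d), x ≠ y →
        ∫ z in Metric.sphere x (2 * ‖x - y‖),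
          (∫ r in Set.Ioi (0 : ℝ),
              r ^ (-(((d : ℝ) + 1) * (q / (q - 1))) / 2) *
                Real.exp (-((q / (q - 1)) * ‖y - z‖ ^ 2) / (2 * r))) ^ (1 / (q / (q - 1)))
            ∂(μH[(d : ℝ) - 1])
        ≤ C * ‖x - y‖ ^ (-(2 / q)) := by
  have hq0 : (0:ℝ) < q := by linarith
  have hqm1 : (0:ℝ) < q - 1 := by linarith
  have hd1 : (1:ℝ) ≤ d := by exact_mod_cast hd
  have hdim : (0:ℝ) ≤ (d:ℝ) - 1 := by linarith
  set q' : ℝ := q / (q - 1) with hq'def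
  have hq'1 : 1 < q' := by
    rw [hq'def, lt_div_iff₀ hqm1]; linarith
  have hq'0 : (0:ℝ) < q' := by linarith
  set e : ℝ := -(((d : ℝ) + 1) * q') / 2 with hedef
  have he : e < -1 := by
    rw [hedef, div_lt_iff₀ (by norm_num : (0:ℝ) < 2)]
    nlinarith
  set B : ℝ := ∫ s in Set.Ioi (0:ℝ), s ^ e * Real.exp (-q' / (2 * s)) with hBdef
  have hB0 : 0 ≤ B := by
    apply setIntegral_nonneg measurableSet_Ioi
    intro r hr
    exact mul_nonneg (Real.rpow_nonneg (le_of_lt hr) e) (Real.exp_pos _).le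
  set A : ENNReal := μH[(d:ℝ) - 1] (Metric.sphere (0 : EuclideanSpace ℝ (Fin d)) 1) with hAdef
  have hA : A ≠ ⊤ := (stmt7_sphere_finite d hd).ne
  set C0 : ℝ := B ^ (1 / q') * 2 ^ ((d:ℝ) - 1) * A.toReal with hC0def
  have hC0 : 0 ≤ C0 :=
    mul_nonneg (mul_nonneg (Real.rpow_nonneg hB0 _)
      (Real.rpow_nonneg (by norm_num) _)) ENNReal.toReal_nonneg
  refine ⟨C0 + 1, by linarith, ?_⟩
  intro x y hxy
  set δ : ℝ := ‖x - y‖ with hδdef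
  have hδ : 0 < δ := by
    rw [hδdef, norm_pos_iff, sub_ne_zero]
    exact hxy
  have hδ2 : (0:ℝ) < δ ^ 2 := by positivity
  set M : ℝ := ((δ ^ 2) ^ (e + 1) * B) ^ (1 / q') with hMdef
  have hM0 : 0 ≤ M := Real.rpow_nonneg (mul_nonneg (Real.rpow_nonneg hδ2.le _) hB0) _
  have hInn : ∀ z : EuclideanSpace ℝ (Fin d),
      0 ≤ ∫ r in Set.Ioi (0:ℝ), r ^ e * Real.exp (-(q' * ‖y - z‖ ^ 2) / (2 * r)) := by
    intro z
    apply setIntegral_nonneg measurableSet_Ioi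
    intro r hr
    exact mul_nonneg (Real.rpow_nonneg (le_of_lt hr) e) (Real.exp_pos _).le
  have hIle : ∀ z ∈ Metric.sphere x (2 * δ),
      (∫ r in Set.Ioi (0:ℝ), r ^ e * Real.exp (-(q' * ‖y - z‖ ^ 2) / (2 * r)))
        ≤ (δ ^ 2) ^ (e + 1) * B := by
    intro z hz
    have hxz : ‖x - z‖ = 2 * δ := by
      rw [← dist_eq_norm, dist_comm]
      exact Metric.mem_sphere.1 hz
    have hyz : δ ≤ ‖y - z‖ := by
      have h1 : ‖x - z‖ - ‖x - y‖ ≤ ‖(x - z) - (x - y)‖ := norm_sub_norm_le _ _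
      have h2 : (x - z) - (x - y) = y - z := by abel
      rw [h2, hxz, ← hδdef] at h1
      linarith
    have hposδ : (0:ℝ) < q' * δ ^ 2 := by positivity
    have hcomp : (∫ r in Set.Ioi (0:ℝ), r ^ e * Real.exp (-(q' * ‖y - z‖ ^ 2) / (2 * r)))
        ≤ ∫ r in Set.Ioi (0:ℝ), r ^ e * Real.exp (-(q' * δ ^ 2) / (2 * r)) := by
      apply integral_mono_of_nonneg
      · apply (ae_restrict_iff' measurableSet_Ioi).2
        apply MeasureTheory.ae_of_all
        intro r hr
        exact mul_nonneg (Real.rpow_nonneg (le_of_lt hr) e) (Real.exp_pos _).le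
      · exact stmt7_gpi he hposδ
      · apply (ae_restrict_iff' measurableSet_Ioi).2
        apply MeasureTheory.ae_of_all
        intro r hr
        rw [Set.mem_Ioi] at hr
        apply mul_le_mul_of_nonneg_left _ (Real.rpow_nonneg hr.le e)
        apply Real.exp_le_exp.2
        have h2r : (0:ℝ) < 2 * r := by linarith
        apply (div_le_div_iff_of_pos_right h2r).2
        apply neg_le_neg
        apply mul_le_mul_of_nonneg_left _ hq'0.le
        exact pow_le_pow_left₀ hδ.le hyz 2
    calc (∫ r in Set.Ioi (0:ℝ), r ^ e * Real.exp (-(q' * ‖y - z‖ ^ 2) / (2 * r)))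
        ≤ ∫ r in Set.Ioi (0:ℝ), r ^ e * Real.exp (-(q' * δ ^ 2) / (2 * r)) := hcomp
      _ = (δ ^ 2) ^ (e + 1) * B := stmt7_gscale e q' hδ2
  have h2δ : (0:ℝ) < 2 * δ := by linarith
  have hμle := stmt7_sphere_scale d hd x h2δ
  have hRHSne : (ENNReal.ofReal (2 * δ)) ^ ((d:ℝ) - 1) * A ≠ ⊤ :=
    ENNReal.mul_ne_top (ENNReal.rpow_ne_top_of_nonneg hdim ENNReal.ofReal_ne_top) hA
  have hμfin : μH[(d:ℝ) - 1] (Metric.sphere x (2 * δ)) < ⊤ :=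
    lt_of_le_of_lt hμle (lt_top_iff_ne_top.2 hRHSne)
  have hbound : ∀ᵐ z ∂(μH[(d:ℝ) - 1] : Measure (EuclideanSpace ℝ (Fin d))),
      z ∈ Metric.sphere x (2 * δ) →
      ‖(∫ r in Set.Ioi (0:ℝ), r ^ e * Real.exp (-(q' * ‖y - z‖ ^ 2) / (2 * r))) ^ (1 / q')‖
        ≤ M := by
    apply MeasureTheory.ae_of_all
    intro z hz
    rw [Real.norm_eq_abs, abs_of_nonneg (Real.rpow_nonneg (hInn z) _)]
    exact Real.rpow_le_rpow (hInn z) (hIle z hz) (by positivity)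
  have key := norm_setIntegral_le_of_norm_le_const_ae' hμfin
    hbound
  have hμreal : (μH[(d:ℝ) - 1] (Metric.sphere x (2 * δ))).toReal
      ≤ (2 * δ) ^ ((d:ℝ) - 1) * A.toReal := by
    have h := ENNReal.toReal_mono hRHSne hμle
    rwa [ENNReal.toReal_mul, ← ENNReal.toReal_rpow, ENNReal.toReal_ofReal h2δ.le] at h
  have halg : M * ((2 * δ) ^ ((d:ℝ) - 1) * A.toReal) = C0 * δ ^ (-(2 / q)) := by
    have hmul1 : M = ((δ ^ 2) ^ (e + 1)) ^ (1 / q') * B ^ (1 / q') := by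
      rw [hMdef, Real.mul_rpow (Real.rpow_nonneg hδ2.le _) hB0]
    have hmul2 : (2 * δ) ^ ((d:ℝ) - 1) = 2 ^ ((d:ℝ) - 1) * δ ^ ((d:ℝ) - 1) :=
      Real.mul_rpow (by norm_num) hδ.le
    have hmul3 : ((δ ^ 2) ^ (e + 1)) ^ (1 / q') = δ ^ ((2 : ℝ) * (e + 1) * (1 / q')) := by
      rw [← Real.rpow_natCast δ 2, ← Real.rpow_mul hδ.le, ← Real.rpow_mul hδ.le]
      norm_num
    have hmul4 : δ ^ ((2 : ℝ) * (e + 1) * (1 / q')) * δ ^ ((d:ℝ) - 1)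
        = δ ^ ((2 : ℝ) * (e + 1) * (1 / q') + ((d:ℝ) - 1)) := (Real.rpow_add hδ _ _).symm
    have hexp : (2 : ℝ) * (e + 1) * (1 / q') + ((d:ℝ) - 1) = -(2 / q) := by
      rw [hedef, hq'def]
      field_simp
      ring
    calc M * ((2 * δ) ^ ((d:ℝ) - 1) * A.toReal)
        = (((δ ^ 2) ^ (e + 1)) ^ (1 / q') * B ^ (1 / q')) *
            ((2 ^ ((d:ℝ) - 1) * δ ^ ((d:ℝ) - 1)) * A.toReal) := by rw [hmul1, hmul2]
      _ = (B ^ (1 / q') * 2 ^ ((d:ℝ) - 1) * A.toReal) *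
            (δ ^ ((2 : ℝ) * (e + 1) * (1 / q')) * δ ^ ((d:ℝ) - 1)) := by rw [hmul3]; ring
      _ = C0 * δ ^ (-(2 / q)) := by rw [hmul4, hexp, hC0def]
  calc (∫ z in Metric.sphere x (2 * δ),
          (∫ r in Set.Ioi (0:ℝ), r ^ e * Real.exp (-(q' * ‖y - z‖ ^ 2) / (2 * r))) ^ (1 / q')
          ∂(μH[(d:ℝ) - 1]))
      ≤ ‖∫ z in Metric.sphere x (2 * δ),
          (∫ r in Set.Ioi (0:ℝ), r ^ e * Real.exp (-(q' * ‖y - z‖ ^ 2) / (2 * r))) ^ (1 / q')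
          ∂(μH[(d:ℝ) - 1])‖ := le_abs_self _
    _ ≤ M * (μH[(d:ℝ) - 1] (Metric.sphere x (2 * δ))).toReal := key
    _ ≤ M * ((2 * δ) ^ ((d:ℝ) - 1) * A.toReal) := mul_le_mul_of_nonneg_left hμreal hM0
    _ = C0 * δ ^ (-(2 / q)) := halg
    _ ≤ (C0 + 1) * δ ^ (-(2 / q)) :=
        mul_le_mul_of_nonneg_right (by linarith) (Real.rpow_nonneg hδ.le _)
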